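/- arXiv:2010.07802 — 4 statements merged into one kernel-verified Lean document; each statement's English description precedes it below -/
import Mathlib

section
/- The infinite dihedral group is the free product of two copies of ℤ/2ℤ: the group homomorphism from the free product (ℤ/2ℤ) * (ℤ/2ℤ) to the infinite dihedral group D_∞ that sends the generator of the first factor to the reflection sr 0 and the generator of the second factor to the reflection sr 1 is a group isomorphism. -/
open DihedralGroup

namespace InfDihAux

abbrev Cop := Monoid.Coprod (Multiplicative (ZMod 2)) (Multiplicative (ZMod 2))

def a : Cop := Monoid.Coprod.inl (Multiplicative.ofAdd (1 : ZMod 2))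
def b : Cop := Monoid.Coprod.inr (Multiplicative.ofAdd (1 : ZMod 2))

lemma two_cases (x : Multiplicative (ZMod 2)) :
    x = 1 ∨ x = Multiplicative.ofAdd (1 : ZMod 2) := by
  revert x; decide

lemma gen_sq : (Multiplicative.ofAdd (1 : ZMod 2)) * (Multiplicative.ofAdd (1 : ZMod 2)) = 1 := by
  decide

lemma a_mul_a : a * a = 1 := by rw [a, ← map_mul, gen_sq, map_one]

lemma b_mul_b : b * b = 1 := by rw [b, ← map_mul, gen_sq, map_one]

lemma a_inv : a⁻¹ = a := by rw [inv_eq_iff_mul_eq_one, a_mul_a]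

lemma b_inv : b⁻¹ = b := by rw [inv_eq_iff_mul_eq_one, b_mul_b]

lemma semiconj : SemiconjBy a (a * b) (a * b)⁻¹ := by
  unfold SemiconjBy
  rw [mul_inv_rev, a_inv, b_inv, ← mul_assoc, a_mul_a, one_mul, mul_assoc, a_mul_a, mul_one]

lemma conj_pow (i : ℤ) : a * (a * b) ^ i = (a * b) ^ (-i) * a := by
  have := (semiconj.zpow_right i).eq
  rw [this, zpow_neg, inv_zpow]

def iz (i : ZMod 0) : ℤ := i

lemma iz_add (i j : ZMod 0) : iz (i + j) = iz i + iz j := rfl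
lemma iz_sub (i j : ZMod 0) : iz (i - j) = iz i - iz j := rfl

def f : DihedralGroup 0 → Cop
  | r i => (a * b) ^ iz i
  | sr i => a * (a * b) ^ iz i

lemma f_mul (x y : DihedralGroup 0) : f (x * y) = f x * f y := by
  rcases x with i | i <;> rcases y with j | j <;>
    simp only [f, r_mul_r, r_mul_sr, sr_mul_r, sr_mul_sr, iz_add, iz_sub]
  · rw [zpow_add]
  · rw [conj_pow, conj_pow, ← mul_assoc, ← zpow_add]
    congr 1; ring
  · rw [mul_assoc, ← zpow_add]
  · rw [conj_pow, mul_assoc, ← mul_assoc a a, a_mul_a, one_mul, ← zpow_add]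
    congr 1; ring

def ψ : DihedralGroup 0 →* Cop := MonoidHom.mk' f f_mul

lemma r_one_zpow (i : ℤ) : (r 1 : DihedralGroup 0) ^ i = r ((i : ZMod 0)) := by
  induction i using Int.induction_on with
  | zero => rfl
  | succ n ih => rw [zpow_add_one, ih]; exact r_mul_r _ _
  | pred n ih =>
      have h : (r 1 : DihedralGroup 0) * r (-1) = 1 := by
        rw [r_mul_r, one_def]; norm_num
      rw [zpow_sub_one, ih, inv_eq_of_mul_eq_one_right h]
      exact (r_mul_r _ _).trans (by congr 1)

lemma r_eq (i : ZMod 0) : (r ((iz i : ZMod 0)) : DihedralGroup 0) = r i := rfl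

end InfDihAux

open InfDihAux in
/-- The infinite dihedral group is the free product `ℤ/2ℤ * ℤ/2ℤ`: the homomorphism from the
coproduct of two copies of `ℤ/2ℤ` to `DihedralGroup 0` sending the generator of the first factor
to the reflection `sr 0` and the generator of the second factor to the reflection `sr 1` is an
isomorphism (i.e. it is bijective). -/
theorem infinite_dihedral_is_free_product
    (φ : Monoid.Coprod (Multiplicative (ZMod 2)) (Multiplicative (ZMod 2)) →* DihedralGroup 0)
    (h₁ : φ (Monoid.Coprod.inl (Multiplicative.ofAdd (1 : ZMod 2))) = sr (0 : ZMod 0))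
    (h₂ : φ (Monoid.Coprod.inr (Multiplicative.ofAdd (1 : ZMod 2))) = sr (1 : ZMod 0)) :
    Function.Bijective φ := by
  have hab : φ (a * b) = r 1 := by
    rw [map_mul, a, b, h₁, h₂, sr_mul_sr]; norm_num
  have hright : ∀ x : DihedralGroup 0, φ (ψ x) = x := by
    intro x
    rcases x with i | i
    · show φ ((a * b) ^ iz i) = r i
      rw [map_zpow, hab, InfDihAux.r_one_zpow, r_eq]
    · show φ (a * (a * b) ^ iz i) = sr i
      rw [map_mul, map_zpow, hab, InfDihAux.r_one_zpow, r_eq, a, h₁, sr_mul_r, zero_add]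
  have hleft : ∀ y, ψ (φ y) = y := by
    have : ψ.comp φ = MonoidHom.id _ := by
      apply Monoid.Coprod.hom_ext <;> refine MonoidHom.ext fun x => ?_
      · rcases two_cases x with rfl | rfl
        · simp
        · show ψ (φ (Monoid.Coprod.inl _)) = _
          rw [h₁]
          show a * (a * b) ^ iz 0 = _
          show a * (a * b) ^ (0 : ℤ) = _
          rw [zpow_zero, mul_one]; rfl
      · rcases two_cases x with rfl | rfl
        · simp
        · show ψ (φ (Monoid.Coprod.inr _)) = _
          rw [h₂]
          show a * (a * b) ^ iz 1 = _
          show a * (a * b) ^ (1 : ℤ) = _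
          rw [zpow_one, ← mul_assoc, a_mul_a, one_mul]; rfl
    intro y
    exact DFunLike.congr_fun this y
  exact Function.bijective_iff_has_inverse.mpr ⟨ψ, hleft, hright⟩
end

section
/- Let p be a prime number. For m ≥ n ≥ 1, let φ_{mn} : D_{p^m} → D_{p^n} be the group homomorphism between finite dihedral groups sending r i to r (i mod p^n) and sr i to sr (i mod p^n). Let L be the subgroup of the product ∏_{n ≥ 1} D_{p^n} consisting of compatible sequences, i.e. those (x_n)_n with φ_{mn}(x_m) = x_n for all m ≥ n, equipped with the topology induced from the product of the discrete topologies. Then L is isomorphic as a topological group to the semidirect product ℤ_p ⋊ ℤ/2ℤ, where ℤ_p is the ring of p-adic integers with its usual topology, the nontrivial element of ℤ/2ℤ acts on the additive group of ℤ_p by negation, and the semidirect product carries the product topology. -/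
open DihedralGroup

/-- The canonical map `DihedralGroup b → DihedralGroup a` (for `a ∣ b`) sending `r i` to
`r (i mod a)` and `sr i` to `sr (i mod a)`. -/
def dihedralTransitionFun {a b : ℕ} (h : a ∣ b) : DihedralGroup b → DihedralGroup a
  | .r i => .r (ZMod.castHom h (ZMod a) i)
  | .sr i => .sr (ZMod.castHom h (ZMod a) i)

/-- The canonical group homomorphism `DihedralGroup b →* DihedralGroup a` (for `a ∣ b`) sending
`r i` to `r (i mod a)` and `sr i` to `sr (i mod a)`. -/
def dihedralTransition {a b : ℕ} (h : a ∣ b) : DihedralGroup b →* DihedralGroup a where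
  toFun := dihedralTransitionFun h
  map_one' := by
    show dihedralTransitionFun h (DihedralGroup.r 0) = _
    simp [dihedralTransitionFun, DihedralGroup.one_def, -DihedralGroup.r_zero]
  map_mul' := by
    rintro (i | i) (j | j) <;>
      simp [dihedralTransitionFun, map_add, map_sub]

/-- The projective limit `L` of the system `(D_{p^n})_{n ≥ 1}` with the transition maps
`φ_{mn} : D_{p^m} → D_{p^n}`, realized as the subgroup of compatible sequences in the product
`∏_{n ≥ 1} D_{p^n}` (indexed here by `n : ℕ`, the `n`-th factor being `D_{p^(n+1)}`). -/
def dihedralCompatible (p : ℕ) :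
    Subgroup (Π n : ℕ, DihedralGroup (p ^ (n + 1))) where
  carrier := {x | ∀ m n (h : n ≤ m),
    dihedralTransition (pow_dvd_pow p (Nat.succ_le_succ h)) (x m) = x n}
  one_mem' := by
    intro m n h
    simp only [Pi.one_apply, map_one]
  mul_mem' := by
    intro x y hx hy m n h
    simp only [Pi.mul_apply, map_mul, hx m n h, hy m n h]
  inv_mem' := by
    intro x hx m n h
    simp only [Pi.inv_apply, map_inv, hx m n h]


namespace DihedralLimitAux

open DihedralGroup

def dhCoord {k : ℕ} : DihedralGroup k → ZMod k
  | .r i => i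
  | .sr i => -i

def dhSign {k : ℕ} : DihedralGroup k → ZMod 2
  | .r _ => 0
  | .sr _ => 1

lemma dhCoord_transition {a b : ℕ} (h : a ∣ b) (x : DihedralGroup b) :
    dhCoord (dihedralTransition h x) = ZMod.castHom h (ZMod a) (dhCoord x) := by
  cases x with
  | r i => rfl
  | sr i => show -(ZMod.castHom h (ZMod a) i) = ZMod.castHom h (ZMod a) (-i); rw [map_neg]

lemma dhSign_transition {a b : ℕ} (h : a ∣ b) (x : DihedralGroup b) :
    dhSign (dihedralTransition h x) = dhSign x := by
  cases x <;> rfl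

lemma dhSign_mul {k : ℕ} (x y : DihedralGroup k) :
    dhSign (x * y) = dhSign x + dhSign y := by
  cases x <;> cases y <;>
    simp [dhSign, r_mul_r, r_mul_sr, sr_mul_r, sr_mul_sr] <;> decide

lemma dhCoord_mul₀ {k : ℕ} {a : DihedralGroup k} (b : DihedralGroup k) (h : dhSign a = 0) :
    dhCoord (a * b) = dhCoord a + dhCoord b := by
  cases a with
  | r i =>
    cases b with
    | r j => simp [r_mul_r, dhCoord]
    | sr j => simp [r_mul_sr, dhCoord]; ring
  | sr i => exact absurd h (show ¬(1 : ZMod 2) = 0 by decide)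

lemma dhCoord_mul₁ {k : ℕ} {a : DihedralGroup k} (b : DihedralGroup k) (h : dhSign a = 1) :
    dhCoord (a * b) = dhCoord a - dhCoord b := by
  cases a with
  | r i => exact absurd h (show ¬(0 : ZMod 2) = 1 by decide)
  | sr i =>
    cases b with
    | r j => simp [sr_mul_r, dhCoord]; ring
    | sr j => simp [sr_mul_sr, dhCoord]; ring

lemma dh_ext {k : ℕ} {a b : DihedralGroup k} (h1 : dhSign a = dhSign b)
    (h2 : dhCoord a = dhCoord b) : a = b := by
  cases a with
  | r i =>
    cases b with
    | r j => exact congrArg DihedralGroup.r h2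
    | sr j => exact absurd h1 (show ¬(0 : ZMod 2) = 1 by decide)
  | sr i =>
    cases b with
    | r j => exact absurd h1 (show ¬(1 : ZMod 2) = 0 by decide)
    | sr j => exact congrArg DihedralGroup.sr (neg_injective h2)

lemma zmod2_cases (s : ZMod 2) : s = 0 ∨ s = 1 := by revert s; decide


lemma cast_cast' {a b c : ℕ} (h1 : a ∣ b) (h2 : b ∣ c) (x : ZMod c) :
    ZMod.castHom h1 (ZMod a) (ZMod.castHom h2 (ZMod b) x) =
      ZMod.castHom (h1.trans h2) (ZMod a) x :=
  RingHom.congr_fun (ZMod.castHom_comp h1 h2) x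

def zmodCompat (p : ℕ) : Subring (Π n : ℕ, ZMod (p ^ (n + 1))) where
  carrier := {a | ∀ m n (h : n ≤ m),
    ZMod.castHom (pow_dvd_pow p (Nat.succ_le_succ h)) (ZMod (p ^ (n + 1))) (a m) = a n}
  zero_mem' := by intro m n h; simp only [Pi.zero_apply, map_zero]
  one_mem' := by intro m n h; simp only [Pi.one_apply, map_one]
  add_mem' := by intro a b ha hb m n h; simp only [Pi.add_apply, map_add, ha m n h, hb m n h]
  mul_mem' := by intro a b ha hb m n h; simp only [Pi.mul_apply, map_mul, ha m n h, hb m n h]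
  neg_mem' := by intro a ha m n h; simp only [Pi.neg_apply, map_neg, ha m n h]

variable (p : ℕ) [Fact p.Prime]

def zmodF (k : ℕ) : zmodCompat p →+* ZMod (p ^ k) :=
  (ZMod.castHom (pow_dvd_pow p (Nat.le_succ k)) (ZMod (p ^ k))).comp
    ((Pi.evalRingHom _ k).comp (zmodCompat p).subtype)

lemma zmodF_compat : ∀ (k1 k2 : ℕ) (hk : k1 ≤ k2),
    (ZMod.castHom (pow_dvd_pow p hk) (ZMod (p ^ k1))).comp (zmodF p k2) = zmodF p k1 := by
  intro k1 k2 hk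
  ext a
  show ZMod.castHom (pow_dvd_pow p hk) (ZMod (p ^ k1))
      (ZMod.castHom (pow_dvd_pow p (Nat.le_succ k2)) (ZMod (p ^ k2)) (a.1 k2)) =
    ZMod.castHom (pow_dvd_pow p (Nat.le_succ k1)) (ZMod (p ^ k1)) (a.1 k1)
  rw [cast_cast', ← a.2 k2 k1 hk, cast_cast']

noncomputable def toPadic : zmodCompat p →+* PadicInt p := PadicInt.lift (zmodF_compat p)

lemma toZModPow_toPadic (a : zmodCompat p) (n : ℕ) :
    PadicInt.toZModPow (n + 1) (toPadic p a) = a.1 n :=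
  (RingHom.congr_fun (PadicInt.lift_spec (zmodF_compat p) (n + 1)) a).trans
    (a.2 (n + 1) n (Nat.le_succ n))

lemma toPadic_injective : Function.Injective (toPadic p) := fun a b h =>
  Subtype.ext (funext fun n => by
    rw [← toZModPow_toPadic p a n, ← toZModPow_toPadic p b n, h])

noncomputable def padicSeq' (z : PadicInt p) : zmodCompat p :=
  ⟨fun n => PadicInt.toZModPow (n + 1) z, fun m n h =>
    RingHom.congr_fun (PadicInt.zmod_cast_comp_toZModPow (n + 1) (m + 1) (Nat.succ_le_succ h)) z⟩

lemma toPadic_padicSeq' (z : PadicInt p) : toPadic p (padicSeq' p z) = z := by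
  rw [← PadicInt.ext_of_toZModPow]
  intro n
  cases n with
  | zero =>
    haveI : Subsingleton (ZMod (p ^ 0)) := by rw [pow_zero]; infer_instance
    exact Subsingleton.elim _ _
  | succ n => rw [toZModPow_toPadic]; rfl


variable {p : ℕ} [Fact p.Prime]

def dcSeq (x : dihedralCompatible p) : zmodCompat p :=
  ⟨fun n => dhCoord (x.1 n), fun m n h => by
    show ZMod.castHom (pow_dvd_pow p (Nat.succ_le_succ h)) (ZMod (p ^ (n + 1)))
        (dhCoord (x.1 m)) = dhCoord (x.1 n)
    rw [← x.2 m n h, dhCoord_transition]⟩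

def dcSign (x : dihedralCompatible p) : ZMod 2 := dhSign (x.1 0)

lemma dhSign_eq (x : dihedralCompatible p) (n : ℕ) : dhSign (x.1 n) = dcSign x := by
  rw [dcSign, ← x.2 n 0 (Nat.zero_le n), dhSign_transition]

variable (φ : Multiplicative (ZMod 2) →* MulAut (Multiplicative (PadicInt p)))

noncomputable def dcHom
    (hφ : φ (Multiplicative.ofAdd (1 : ZMod 2)) = MulEquiv.inv (Multiplicative (PadicInt p))) :
    dihedralCompatible p →* SemidirectProduct (Multiplicative (PadicInt p))
      (Multiplicative (ZMod 2)) φ :=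
  MonoidHom.mk'
    (fun x => ⟨Multiplicative.ofAdd (toPadic p (dcSeq x)), Multiplicative.ofAdd (dcSign x)⟩)
    (by
      intro x y
      have hcoe : ∀ n, (x * y).1 n = x.1 n * y.1 n := fun n => rfl
      ext
      case right =>
        show Multiplicative.ofAdd (dcSign (x * y)) =
          Multiplicative.ofAdd (dcSign x) * Multiplicative.ofAdd (dcSign y)
        rw [← ofAdd_add]
        congr 1
        show dhSign ((x * y).1 0) = _
        rw [hcoe 0, dhSign_mul]
        rfl
      case left =>
        show Multiplicative.ofAdd (toPadic p (dcSeq (x * y))) =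
          Multiplicative.ofAdd (toPadic p (dcSeq x)) *
            (φ (Multiplicative.ofAdd (dcSign x)) (Multiplicative.ofAdd (toPadic p (dcSeq y))))
        rcases zmod2_cases (dcSign x) with hs | hs
        · rw [hs]
          rw [show Multiplicative.ofAdd (0 : ZMod 2) = 1 from rfl, map_one]
          show _ = Multiplicative.ofAdd (toPadic p (dcSeq x)) *
            Multiplicative.ofAdd (toPadic p (dcSeq y))
          have hseq : dcSeq (x * y) = dcSeq x + dcSeq y := by
            refine Subtype.ext (funext fun n => ?_)
            show dhCoord ((x * y).1 n) = dhCoord (x.1 n) + dhCoord (y.1 n)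
            rw [hcoe n]
            exact dhCoord_mul₀ _ (by rw [dhSign_eq, hs])
          rw [hseq, (toPadic p).map_add, ofAdd_add]
        · rw [hs, hφ]
          show _ = Multiplicative.ofAdd (toPadic p (dcSeq x)) *
            (Multiplicative.ofAdd (toPadic p (dcSeq y)))⁻¹
          have hseq : dcSeq (x * y) = dcSeq x - dcSeq y := by
            refine Subtype.ext (funext fun n => ?_)
            show dhCoord ((x * y).1 n) = dhCoord (x.1 n) - dhCoord (y.1 n)
            rw [hcoe n]
            exact dhCoord_mul₁ _ (by rw [dhSign_eq, hs])
          rw [hseq, (toPadic p).map_sub, sub_eq_add_neg, ofAdd_add, ofAdd_neg])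

variable (hφ : φ (Multiplicative.ofAdd (1 : ZMod 2)) = MulEquiv.inv (Multiplicative (PadicInt p)))

lemma dcHom_injective : Function.Injective (dcHom φ hφ) := by
  intro x y h
  have hl := congrArg SemidirectProduct.left h
  have hr := congrArg SemidirectProduct.right h
  have hseq : dcSeq x = dcSeq y := toPadic_injective p (Multiplicative.ofAdd.injective hl)
  have hsgn : dcSign x = dcSign y := Multiplicative.ofAdd.injective hr
  refine Subtype.ext (funext fun n => ?_)
  refine dh_ext ?_ ?_
  · rw [dhSign_eq, dhSign_eq, hsgn]
  · show (dcSeq x).1 n = (dcSeq y).1 n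
    rw [hseq]

lemma dcHom_surjective : Function.Surjective (dcHom φ hφ) := by
  intro w
  set z : PadicInt p := Multiplicative.toAdd w.left with hz
  set a : zmodCompat p := padicSeq' p z with ha
  rcases zmod2_cases (Multiplicative.toAdd w.right) with hs | hs
  · refine ⟨⟨fun n => DihedralGroup.r (a.1 n), fun m n h => ?_⟩, ?_⟩
    · show DihedralGroup.r (ZMod.castHom _ _ (a.1 m)) = _
      rw [a.2 m n h]
    · ext
      case right =>
        show Multiplicative.ofAdd (dhSign (DihedralGroup.r (a.1 0))) = w.right
        rw [show dhSign (DihedralGroup.r (a.1 0)) = 0 from rfl, ← hs]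
        rfl
      case left =>
        show Multiplicative.ofAdd (toPadic p (dcSeq _)) = w.left
        have : dcSeq (⟨fun n => DihedralGroup.r (a.1 n), fun m n h => by
            show DihedralGroup.r (ZMod.castHom _ _ (a.1 m)) = _
            rw [a.2 m n h]⟩ : dihedralCompatible p) = a :=
          Subtype.ext (funext fun n => rfl)
        rw [this, ha, toPadic_padicSeq']
        rfl
  · refine ⟨⟨fun n => DihedralGroup.sr (-(a.1 n)), fun m n h => ?_⟩, ?_⟩
    · show DihedralGroup.sr (ZMod.castHom _ _ (-(a.1 m))) = _
      rw [map_neg, a.2 m n h]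
    · ext
      case right =>
        show Multiplicative.ofAdd (dhSign (DihedralGroup.sr (-(a.1 0)))) = w.right
        rw [show dhSign (DihedralGroup.sr (-(a.1 0))) = 1 from rfl, ← hs]
        rfl
      case left =>
        show Multiplicative.ofAdd (toPadic p (dcSeq _)) = w.left
        have : dcSeq (⟨fun n => DihedralGroup.sr (-(a.1 n)), fun m n h => by
            show DihedralGroup.sr (ZMod.castHom _ _ (-(a.1 m))) = _
            rw [map_neg, a.2 m n h]⟩ : dihedralCompatible p) = a :=
          Subtype.ext (funext fun n => neg_neg _)
        rw [this, ha, toPadic_padicSeq']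
        rfl

noncomputable def dcEquiv :
    dihedralCompatible p ≃* SemidirectProduct (Multiplicative (PadicInt p))
      (Multiplicative (ZMod 2)) φ :=
  MulEquiv.ofBijective (dcHom φ hφ) ⟨dcHom_injective φ hφ, dcHom_surjective φ hφ⟩


lemma norm_sub_le_of_toZModPow (k : ℕ) {u v : PadicInt p}
    (h : PadicInt.toZModPow k u = PadicInt.toZModPow k v) :
    ‖u - v‖ ≤ (p : ℝ) ^ (-(k : ℤ)) := by
  rw [PadicInt.norm_le_pow_iff_mem_span_pow, ← PadicInt.ker_toZModPow, RingHom.mem_ker,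
    map_sub, sub_eq_zero]
  exact h

lemma isOpen_toZModPow_fiber (k : ℕ) (i : ZMod (p ^ k)) :
    IsOpen {z : PadicInt p | PadicInt.toZModPow k z = i} := by
  rw [Metric.isOpen_iff]
  intro z0 hz0
  refine ⟨(p : ℝ) ^ (-(k : ℤ)), ?_, ?_⟩
  · have hp : (0 : ℝ) < (p : ℝ) := by exact_mod_cast (Fact.out : p.Prime).pos
    positivity
  · intro w hw
    rw [Metric.mem_ball, dist_eq_norm] at hw
    have h3 : PadicInt.toZModPow k (w - z0) = 0 := by
      have h2 : w - z0 ∈ Ideal.span {(p : PadicInt p) ^ k} :=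
        (PadicInt.norm_le_pow_iff_mem_span_pow _ k).1 (le_of_lt hw)
      rw [← RingHom.mem_ker, PadicInt.ker_toZModPow]
      exact h2
    rw [map_sub, sub_eq_zero] at h3
    show PadicInt.toZModPow k w = i
    rw [h3]
    exact hz0


end DihedralLimitAux

open DihedralLimitAux in
/-- The projective limit of the dihedral groups `D_{p^n}` (with the product-of-discrete
topologies) is isomorphic, as a topological group, to the semidirect product `ℤ_p ⋊ ℤ/2ℤ`,
where the nontrivial element of `ℤ/2ℤ` acts on `ℤ_p` by negation and the semidirect product
carries the product topology. -/
theorem dihedral_limit_iso_padic_semidirect (p : ℕ) [Fact p.Prime]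
    (φ : Multiplicative (ZMod 2) →* MulAut (Multiplicative (PadicInt p)))
    (hφ : φ (Multiplicative.ofAdd (1 : ZMod 2)) = MulEquiv.inv (Multiplicative (PadicInt p))) :
    letI : ∀ n : ℕ, TopologicalSpace (DihedralGroup (p ^ (n + 1))) := fun _ => ⊥
    letI : TopologicalSpace (ZMod 2) := ⊥
    letI : TopologicalSpace
        (SemidirectProduct (Multiplicative (PadicInt p)) (Multiplicative (ZMod 2)) φ) :=
      TopologicalSpace.induced (fun x => (x.left, x.right)) inferInstance
    ∃ e : dihedralCompatible p ≃*
        SemidirectProduct (Multiplicative (PadicInt p)) (Multiplicative (ZMod 2)) φ,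
      Continuous e ∧ Continuous e.symm := by
  letI : ∀ n : ℕ, TopologicalSpace (DihedralGroup (p ^ (n + 1))) := fun _ => ⊥
  letI : TopologicalSpace (ZMod 2) := ⊥
  letI : TopologicalSpace
      (SemidirectProduct (Multiplicative (PadicInt p)) (Multiplicative (ZMod 2)) φ) :=
    TopologicalSpace.induced (fun x => (x.left, x.right)) inferInstance
  haveI hD : ∀ n : ℕ, DiscreteTopology (DihedralGroup (p ^ (n + 1))) :=
    fun n => discreteTopology_bot _
  haveI : DiscreteTopology (ZMod 2) := discreteTopology_bot _
  refine ⟨dcEquiv φ hφ, ?_, ?_⟩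
  · -- forward continuity
    rw [continuous_induced_rng]
    refine Continuous.prodMk ?_ ?_
    · -- left coordinate
      show Continuous fun x : dihedralCompatible p =>
        Multiplicative.ofAdd (toPadic p (dcSeq x))
      refine Continuous.comp continuous_ofAdd ?_
      rw [continuous_iff_continuousAt]
      intro x
      rw [ContinuousAt, Metric.tendsto_nhds]
      intro ε hε
      obtain ⟨k, hk⟩ := PadicInt.exists_pow_neg_lt p hε
      have hxopen : IsOpen {y : dihedralCompatible p | y.1 k = x.1 k} := by
        have hck : Continuous fun y : dihedralCompatible p =>
            (y : Π n : ℕ, DihedralGroup (p ^ (n + 1))) k :=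
          (continuous_apply k).comp continuous_subtype_val
        exact hck.isOpen_preimage {x.1 k} (isOpen_discrete _)
      filter_upwards [hxopen.mem_nhds rfl] with y hy
      rw [dist_eq_norm]
      have h1 : PadicInt.toZModPow (k + 1) (toPadic p (dcSeq y)) =
          PadicInt.toZModPow (k + 1) (toPadic p (dcSeq x)) := by
        rw [toZModPow_toPadic, toZModPow_toPadic]
        show dhCoord (y.1 k) = dhCoord (x.1 k)
        rw [hy]
      have h2 : PadicInt.toZModPow k (toPadic p (dcSeq y)) =
          PadicInt.toZModPow k (toPadic p (dcSeq x)) := by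
        rw [← PadicInt.cast_toZModPow k (k + 1) (Nat.le_succ k),
          ← PadicInt.cast_toZModPow k (k + 1) (Nat.le_succ k), h1]
      exact lt_of_le_of_lt (norm_sub_le_of_toZModPow k h2) hk
    · -- right coordinate
      show Continuous fun x : dihedralCompatible p => Multiplicative.ofAdd (dcSign x)
      have h0 : Continuous fun y : dihedralCompatible p =>
          (y : Π n : ℕ, DihedralGroup (p ^ (n + 1))) 0 :=
        (continuous_apply 0).comp continuous_subtype_val
      exact (continuous_of_discreteTopology
        (f := fun d : DihedralGroup (p ^ (0 + 1)) => Multiplicative.ofAdd (dhSign d))).comp h0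
  · -- backward continuity
    set e := dcEquiv (p := p) φ hφ with he
    have key : ∀ (w) (n : ℕ), (e.symm w).1 n =
        if Multiplicative.toAdd w.right = 0 then
          DihedralGroup.r (PadicInt.toZModPow (n + 1) (Multiplicative.toAdd w.left))
        else DihedralGroup.sr (-(PadicInt.toZModPow (n + 1) (Multiplicative.toAdd w.left))) := by
      intro w n
      set x := e.symm w with hx
      have hw : dcHom φ hφ x = w := e.apply_symm_apply w
      have hright : Multiplicative.toAdd w.right = dcSign x := by rw [← hw]; rfl
      have hleft : PadicInt.toZModPow (n + 1) (Multiplicative.toAdd w.left) =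
          dhCoord (x.1 n) := by
        rw [← hw]
        show PadicInt.toZModPow (n + 1) (toPadic p (dcSeq x)) = _
        rw [toZModPow_toPadic]
        rfl
      rw [hright, hleft]
      cases hxn : x.1 n with
      | r i =>
        have hs : dcSign x = 0 := by rw [← dhSign_eq x n, hxn]; rfl
        rw [if_pos hs]
        rfl
      | sr i =>
        have hs : dcSign x = 1 := by rw [← dhSign_eq x n, hxn]; rfl
        rw [if_neg (by rw [hs]; exact (show ¬(1 : ZMod 2) = 0 by decide))]
        show DihedralGroup.sr i = DihedralGroup.sr (- -i)
        rw [neg_neg]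
    have hval : Continuous fun w :
        SemidirectProduct (Multiplicative (PadicInt p)) (Multiplicative (ZMod 2)) φ =>
        ((e.symm w : dihedralCompatible p) : Π n : ℕ, DihedralGroup (p ^ (n + 1))) := by
      refine continuous_pi fun n => ?_
      have hfun : (fun w : SemidirectProduct (Multiplicative (PadicInt p))
            (Multiplicative (ZMod 2)) φ => ((e.symm w : dihedralCompatible p) :
            Π n : ℕ, DihedralGroup (p ^ (n + 1))) n) =
          fun w => if Multiplicative.toAdd w.right = 0 then
            DihedralGroup.r (PadicInt.toZModPow (n + 1) (Multiplicative.toAdd w.left))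
          else DihedralGroup.sr (-(PadicInt.toZModPow (n + 1) (Multiplicative.toAdd w.left))) :=
        funext fun w => key w n
      rw [hfun]
      rw [continuous_discrete_rng]
      intro d
      have hc : Continuous (fun w : SemidirectProduct (Multiplicative (PadicInt p))
          (Multiplicative (ZMod 2)) φ => (w.left, w.right)) := continuous_induced_dom
      cases d with
      | r i =>
        have hset : (fun w : SemidirectProduct (Multiplicative (PadicInt p))
              (Multiplicative (ZMod 2)) φ => if Multiplicative.toAdd w.right = 0 then
              DihedralGroup.r (PadicInt.toZModPow (n + 1) (Multiplicative.toAdd w.left))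
            else DihedralGroup.sr (-(PadicInt.toZModPow (n + 1)
              (Multiplicative.toAdd w.left)))) ⁻¹' {DihedralGroup.r i} =
            (fun w : SemidirectProduct (Multiplicative (PadicInt p))
              (Multiplicative (ZMod 2)) φ => (w.left, w.right)) ⁻¹'
            ({z : Multiplicative (PadicInt p) |
              PadicInt.toZModPow (n + 1) (Multiplicative.toAdd z) = i} ×ˢ
             {s : Multiplicative (ZMod 2) | Multiplicative.toAdd s = 0}) := by
          ext w
          simp only [Set.mem_preimage, Set.mem_singleton_iff, Set.mem_prod, Set.mem_setOf_eq]
          constructor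
          · intro h
            by_cases hs : Multiplicative.toAdd w.right = 0
            · rw [if_pos hs] at h
              exact ⟨by injection h, hs⟩
            · rw [if_neg hs] at h
              exact absurd h (by simp)
          · rintro ⟨h1, h2⟩
            rw [if_pos h2, h1]
        rw [hset]
        refine hc.isOpen_preimage _ (IsOpen.prod ?_ ?_)
        · exact isOpen_toZModPow_fiber (n + 1) i
        · exact isOpen_discrete _
      | sr i =>
        have hset : (fun w : SemidirectProduct (Multiplicative (PadicInt p))
              (Multiplicative (ZMod 2)) φ => if Multiplicative.toAdd w.right = 0 then
              DihedralGroup.r (PadicInt.toZModPow (n + 1) (Multiplicative.toAdd w.left))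
            else DihedralGroup.sr (-(PadicInt.toZModPow (n + 1)
              (Multiplicative.toAdd w.left)))) ⁻¹' {DihedralGroup.sr i} =
            (fun w : SemidirectProduct (Multiplicative (PadicInt p))
              (Multiplicative (ZMod 2)) φ => (w.left, w.right)) ⁻¹'
            ({z : Multiplicative (PadicInt p) |
              PadicInt.toZModPow (n + 1) (Multiplicative.toAdd z) = -i} ×ˢ
             {s : Multiplicative (ZMod 2) | ¬ Multiplicative.toAdd s = 0}) := by
          ext w
          simp only [Set.mem_preimage, Set.mem_singleton_iff, Set.mem_prod, Set.mem_setOf_eq]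
          constructor
          · intro h
            by_cases hs : Multiplicative.toAdd w.right = 0
            · rw [if_pos hs] at h
              exact absurd h (by simp)
            · rw [if_neg hs] at h
              have : -(PadicInt.toZModPow (n + 1) (Multiplicative.toAdd w.left)) = i := by
                injection h
              refine ⟨?_, hs⟩
              rw [← this, neg_neg]
          · rintro ⟨h1, h2⟩
            rw [if_neg h2, h1, neg_neg]
        rw [hset]
        refine hc.isOpen_preimage _ (IsOpen.prod ?_ ?_)
        · exact isOpen_toZModPow_fiber (n + 1) (-i)
        · exact isOpen_discrete _
    exact hval.subtype_mk _
end

section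
/- Let p be a prime number and consider the semidirect product G = ℤ_p ⋊ ℤ/2ℤ, where the nontrivial element of ℤ/2ℤ acts on the additive group of the p-adic integers ℤ_p by negation, and G carries the product topology. Then the group homomorphism from the free product (ℤ/2ℤ) * (ℤ/2ℤ) to G sending the generator of the first factor to (0, 1̄) and the generator of the second factor to (1, 1̄) is injective and has dense image. In particular, the profinite group ℤ_p ⋊ ℤ/2ℤ possesses a dense subgroup isomorphic to the amalgam (ℤ/2ℤ) * (ℤ/2ℤ), i.e. it is presqu'amalgamé. -/
/-- The homomorphism from the free product `ℤ/2ℤ * ℤ/2ℤ` to the semidirect product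
`G = ℤ_p ⋊ ℤ/2ℤ` (the nontrivial element of `ℤ/2ℤ` acting on the additive group of `ℤ_p` by
negation, `G` with the product topology) sending the generator of the first factor to `(0, 1̄)`
and the generator of the second factor to `(1, 1̄)` is injective with dense image: `ℤ_p ⋊ ℤ/2ℤ`
has a dense subgroup isomorphic to the amalgam `ℤ/2ℤ * ℤ/2ℤ`, i.e. it is "presqu'amalgamé". -/
theorem padic_semidirect_presque_amalgame (p : ℕ) [Fact p.Prime]
    (φ : Multiplicative (ZMod 2) →* MulAut (Multiplicative (PadicInt p)))
    (hφ : φ (Multiplicative.ofAdd (1 : ZMod 2)) = MulEquiv.inv (Multiplicative (PadicInt p)))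
    (ψ : Monoid.Coprod (Multiplicative (ZMod 2)) (Multiplicative (ZMod 2)) →*
      SemidirectProduct (Multiplicative (PadicInt p)) (Multiplicative (ZMod 2)) φ)
    (hψ₁ : ψ (Monoid.Coprod.inl (Multiplicative.ofAdd (1 : ZMod 2))) =
      ⟨Multiplicative.ofAdd (0 : PadicInt p), Multiplicative.ofAdd (1 : ZMod 2)⟩)
    (hψ₂ : ψ (Monoid.Coprod.inr (Multiplicative.ofAdd (1 : ZMod 2))) =
      ⟨Multiplicative.ofAdd (1 : PadicInt p), Multiplicative.ofAdd (1 : ZMod 2)⟩) :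
    letI : TopologicalSpace (ZMod 2) := ⊥
    letI : TopologicalSpace
        (SemidirectProduct (Multiplicative (PadicInt p)) (Multiplicative (ZMod 2)) φ) :=
      TopologicalSpace.induced (fun x => (x.left, x.right)) inferInstance
    Function.Injective ψ ∧
      Dense (Set.range ψ :
        Set (SemidirectProduct (Multiplicative (PadicInt p)) (Multiplicative (ZMod 2)) φ)) := by
  classical

  set G := SemidirectProduct (Multiplicative (PadicInt p)) (Multiplicative (ZMod 2)) φ with hG
  set a : Monoid.Coprod (Multiplicative (ZMod 2)) (Multiplicative (ZMod 2)) :=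
    Monoid.Coprod.inl (Multiplicative.ofAdd (1 : ZMod 2)) with ha
  set b : Monoid.Coprod (Multiplicative (ZMod 2)) (Multiplicative (ZMod 2)) :=
    Monoid.Coprod.inr (Multiplicative.ofAdd (1 : ZMod 2)) with hb
  set c := b * a with hc
  -- basic relations
  have haa : a * a = 1 := by
    rw [ha, ← map_mul]
    have : (Multiplicative.ofAdd (1 : ZMod 2)) * Multiplicative.ofAdd (1 : ZMod 2) = 1 := by decide
    rw [this, map_one]
  have hbb : b * b = 1 := by
    rw [hb, ← map_mul]
    have : (Multiplicative.ofAdd (1 : ZMod 2)) * Multiplicative.ofAdd (1 : ZMod 2) = 1 := by decide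
    rw [this, map_one]
  have hainv : a⁻¹ = a := by
    rw [inv_eq_iff_mul_eq_one]; exact haa
  have hbinv : b⁻¹ = b := by
    rw [inv_eq_iff_mul_eq_one]; exact hbb
  have hconj : ∀ m : ℤ, a * c ^ m = c ^ (-m) * a := by
    intro m
    have h1 : a * c * a⁻¹ = c⁻¹ := by
      rw [hc, hainv, mul_inv_rev, hainv, hbinv]
      calc a * (b * a) * a = a * b * (a * a) := by group
        _ = a * b := by rw [haa, mul_one]
    have h2 : a * c ^ m * a⁻¹ = (a * c * a⁻¹) ^ m := by
      rw [conj_zpow]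
    rw [h1] at h2
    have : a * c ^ m = c⁻¹ ^ m * a := by
      rw [← h2]; group
    rw [this, inv_zpow, zpow_neg]
  have hba : c * a = b := by rw [hc, mul_assoc, haa, mul_one]
  have hbcm : ∀ m : ℤ, b * c ^ m = c ^ (1 - m) * a := by
    intro m
    rw [← hba, mul_assoc, hconj m, ← mul_assoc, ← zpow_one_add, ]
    ring_nf
  -- ZMod 2 case analysis
  have hZ : ∀ ε : Multiplicative (ZMod 2), ε = 1 ∨ ε = Multiplicative.ofAdd 1 := by decide
  have honeone : (Multiplicative.ofAdd (1 : ZMod 2)) * Multiplicative.ofAdd (1 : ZMod 2) = 1 := by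
    decide
  have hne : (Multiplicative.ofAdd (1 : ZMod 2)) ≠ 1 := by decide
  -- φ values
  have hφ1 : ∀ y : Multiplicative (PadicInt p), φ (Multiplicative.ofAdd (1 : ZMod 2)) y = y⁻¹ := by
    intro y; rw [hφ]; rfl
  have hφ0 : ∀ y : Multiplicative (PadicInt p), φ 1 y = y := by
    intro y; rw [map_one]; rfl
  -- the section function
  set s : G → Monoid.Coprod (Multiplicative (ZMod 2)) (Multiplicative (ZMod 2)) :=
    fun g => if h : ∃ m : ℤ, g.left = Multiplicative.ofAdd ((m : PadicInt p))
      then c ^ h.choose * (if g.right = 1 then 1 else a) else 1 with hs_def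
  have hcast : Function.Injective (fun m : ℤ =>
      (Multiplicative.ofAdd ((m : PadicInt p)) : Multiplicative (PadicInt p))) := by
    intro m n h
    exact_mod_cast Multiplicative.ofAdd.injective h
  have hs : ∀ (m : ℤ) (ε : Multiplicative (ZMod 2)),
      s ⟨Multiplicative.ofAdd ((m : PadicInt p)), ε⟩
        = c ^ m * (if ε = 1 then 1 else a) := by
    intro m ε
    have hex : ∃ k : ℤ, (SemidirectProduct.mk (Multiplicative.ofAdd ((m : PadicInt p))) ε :
        G).left = Multiplicative.ofAdd ((k : PadicInt p)) := ⟨m, rfl⟩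
    have hch : hex.choose = m := hcast hex.choose_spec.symm
    rw [hs_def]
    simp only [dif_pos hex, hch]
  -- extensionality for G
  have gext : ∀ g h : G, g.left = h.left → g.right = h.right → g = h := by
    rintro ⟨gl, gr⟩ ⟨hl, hr⟩ h1 h2
    cases h1; cases h2; rfl
  -- integer points
  set IntPt : G → Prop := fun g => ∃ m : ℤ, g.left = Multiplicative.ofAdd ((m : PadicInt p))
    with hIntPt
  have intMul : ∀ g h : G, IntPt g → IntPt h → IntPt (g * h) := by
    rintro g h ⟨m, hm⟩ ⟨n, hn⟩
    rcases hZ g.right with hr | hr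
    · exact ⟨m + n, by rw [SemidirectProduct.mul_left, hm, hn, hr, hφ0, ← ofAdd_add]; push_cast; rfl⟩
    · refine ⟨m - n, ?_⟩
      rw [SemidirectProduct.mul_left, hm, hn, hr, hφ1, ← ofAdd_neg, ← ofAdd_add]
      push_cast; ring_nf
  have intA : IntPt (ψ a) := ⟨0, by rw [hψ₁]; push_cast; rfl⟩
  have intB : IntPt (ψ b) := ⟨1, by rw [hψ₂]; push_cast; rfl⟩
  -- single step lemmas
  have stepA : ∀ g : G, IntPt g → s (ψ a * g) = a * s g := by
    rintro ⟨gl, gr⟩ ⟨m, hm⟩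
    simp only at hm
    subst hm
    have hprod : (ψ a * ⟨Multiplicative.ofAdd ((m : PadicInt p)), gr⟩ : G)
        = ⟨Multiplicative.ofAdd (((-m : ℤ) : PadicInt p)), Multiplicative.ofAdd 1 * gr⟩ := by
      refine gext _ _ ?_ ?_
      · rw [SemidirectProduct.mul_left, hψ₁]
        show Multiplicative.ofAdd (0 : PadicInt p) *
          φ (Multiplicative.ofAdd (1 : ZMod 2)) (Multiplicative.ofAdd ((m : PadicInt p))) = _
        rw [hφ1, ← ofAdd_neg, ← ofAdd_add]
        push_cast; ring_nf
      · rw [SemidirectProduct.mul_right, hψ₁]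
    rw [hprod, hs, hs]
    rcases hZ gr with h | h
    · subst h
      rw [if_neg (by simpa using hne), if_pos rfl, mul_one, hconj m]
    · subst h
      rw [if_pos honeone, if_neg hne, mul_one, ← mul_assoc, hconj m, mul_assoc, haa, mul_one]
  have stepB : ∀ g : G, IntPt g → s (ψ b * g) = b * s g := by
    rintro ⟨gl, gr⟩ ⟨m, hm⟩
    simp only at hm
    subst hm
    have hprod : (ψ b * ⟨Multiplicative.ofAdd ((m : PadicInt p)), gr⟩ : G)
        = ⟨Multiplicative.ofAdd (((1 - m : ℤ) : PadicInt p)), Multiplicative.ofAdd 1 * gr⟩ := by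
      refine gext _ _ ?_ ?_
      · rw [SemidirectProduct.mul_left, hψ₂]
        show Multiplicative.ofAdd (1 : PadicInt p) *
          φ (Multiplicative.ofAdd (1 : ZMod 2)) (Multiplicative.ofAdd ((m : PadicInt p))) = _
        rw [hφ1, ← ofAdd_neg, ← ofAdd_add]
        push_cast; ring_nf
      · rw [SemidirectProduct.mul_right, hψ₂]
    rw [hprod, hs, hs]
    rcases hZ gr with h | h
    · subst h
      rw [if_neg (by simpa using hne), if_pos rfl, mul_one, hbcm m]
    · subst h
      rw [if_pos honeone, if_neg hne, mul_one, ← mul_assoc, hbcm m, mul_assoc, haa, mul_one]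
  -- main induction
  have key : ∀ w, IntPt (ψ w) ∧ ∀ g : G, IntPt g → s (ψ w * g) = w * s g := by
    intro w
    induction w using Monoid.Coprod.induction_on' with
    | one =>
      constructor
      · exact ⟨0, by rw [map_one]; push_cast; rfl⟩
      · intro g hg; rw [map_one, one_mul, one_mul]
    | inl_mul m x ih =>
      rcases hZ m with h | h
      · subst h; rw [map_one, one_mul]; exact ih
      · subst h
        constructor
        · rw [map_mul]; exact intMul _ _ intA ih.1
        · intro g hg
          rw [map_mul, mul_assoc, stepA _ (intMul _ _ ih.1 hg), ih.2 g hg, mul_assoc]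
    | inr_mul n x ih =>
      rcases hZ n with h | h
      · subst h; rw [map_one, one_mul]; exact ih
      · subst h
        constructor
        · rw [map_mul]; exact intMul _ _ intB ih.1
        · intro g hg
          rw [map_mul, mul_assoc, stepB _ (intMul _ _ ih.1 hg), ih.2 g hg, mul_assoc]
  have s1 : s 1 = 1 := by
    have h1 : (1 : G) = ⟨Multiplicative.ofAdd (((0:ℤ) : PadicInt p)), (1 : Multiplicative (ZMod 2))⟩ := by
      refine gext _ _ ?_ ?_ <;> push_cast <;> rfl
    rw [h1, hs, if_pos rfl, mul_one, zpow_zero]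
  have hsec : ∀ w, s (ψ w) = w := by
    intro w
    have := (key w).2 1 ⟨0, by push_cast; rfl⟩
    rwa [mul_one, s1, mul_one] at this
  constructor
  · intro u v h
    rw [← hsec u, ← hsec v, h]
  · -- density
    -- compute ψ (c ^ n)
    have hψc : ψ c = SemidirectProduct.inl (Multiplicative.ofAdd ((1 : PadicInt p))) := by
      rw [hc, map_mul, hψ₂, hψ₁]
      refine gext _ _ ?_ ?_
      · rw [SemidirectProduct.mul_left]
        show Multiplicative.ofAdd (1 : PadicInt p) *
          φ (Multiplicative.ofAdd (1 : ZMod 2)) (Multiplicative.ofAdd ((0 : PadicInt p))) = _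
        rw [hφ1]
        simp [SemidirectProduct.left_inl]
      · rw [SemidirectProduct.mul_right]
        show Multiplicative.ofAdd (1:ZMod 2) * Multiplicative.ofAdd (1:ZMod 2) = _
        rw [honeone, SemidirectProduct.right_inl]
    have hψcn : ∀ n : ℤ, ψ (c ^ n) = SemidirectProduct.inl (Multiplicative.ofAdd ((n : PadicInt p))) := by
      intro n
      rw [map_zpow, hψc, ← map_zpow]
      congr 1
      rw [← ofAdd_zsmul]
      norm_num
    have hrange : ∀ (n : ℤ) (ε : Multiplicative (ZMod 2)),
        (⟨Multiplicative.ofAdd ((n : PadicInt p)), ε⟩ : G) ∈ Set.range ψ := by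
      intro n ε
      rcases hZ ε with h | h
      · subst h
        exact ⟨c ^ n, by rw [hψcn]; rfl⟩
      · subst h
        refine ⟨c ^ n * a, ?_⟩
        rw [map_mul, hψcn, hψ₁]
        refine gext _ _ ?_ ?_
        · rw [SemidirectProduct.mul_left, SemidirectProduct.left_inl, SemidirectProduct.right_inl]
          show Multiplicative.ofAdd ((n : PadicInt p)) * φ 1 (Multiplicative.ofAdd (0 : PadicInt p)) = _
          rw [hφ0]
          simp
        · rw [SemidirectProduct.mul_right, SemidirectProduct.right_inl, one_mul]
    -- use induced topology
    intro x
    rw [closure_induced]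
    have hdense : Dense ((Set.range fun n : ℤ =>
          (Multiplicative.ofAdd ((n : PadicInt p)) : Multiplicative (PadicInt p))) ×ˢ
        (Set.univ : Set (Multiplicative (ZMod 2)))) := by
      refine Dense.prod ?_ dense_univ
      exact PadicInt.denseRange_intCast
    have hsub : ((Set.range fun n : ℤ =>
          (Multiplicative.ofAdd ((n : PadicInt p)) : Multiplicative (PadicInt p))) ×ˢ
        (Set.univ : Set (Multiplicative (ZMod 2))))
        ⊆ (fun x : G => (x.left, x.right)) '' Set.range ψ := by
      rintro ⟨y, ε⟩ ⟨⟨n, rfl⟩, -⟩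
      exact ⟨⟨Multiplicative.ofAdd ((n : PadicInt p)), ε⟩, hrange n ε, rfl⟩
    have := hdense.mono hsub
    exact this _
end

section
/- Let p be a prime number and n ≥ 1, and set q = p^n. Let K = ℝ((t)) be the field of formal Laurent series over ℝ and L = ℂ((s)) the field of formal Laurent series over ℂ, regarded as a K-algebra via the injective ring homomorphism K → L that maps the coefficients via the inclusion ℝ → ℂ and scales the exponents by q (so that t is sent to s^q, identifying L with ℂ((t^{1/q}))). Then L is a Galois extension of K of degree 2q, and the Galois group Gal(L/K) is isomorphic to the dihedral group D_q of order 2q. -/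
open HahnSeries

/-- The ring homomorphism `ℝ((t)) →+* ℂ((t))` extending coefficients along the inclusion
`ℝ → ℂ`. -/
noncomputable def laurentOfReal : LaurentSeries ℝ →+* LaurentSeries ℂ where
  toFun x := x.map (Complex.ofRealHom : ℝ →+* ℂ)
  map_zero' := by ext g; simp
  map_one' := by ext g; by_cases h : g = (0 : ℤ) <;> simp [h, HahnSeries.coeff_one]
  map_add' x y := by ext g; simp
  map_mul' x y := HahnSeries.map_mul Complex.ofRealHom.toNonUnitalRingHom

/-- The injective ring homomorphism `ℝ((t)) →+* ℂ((s))` sending `Σ aₖ tᵏ` to `Σ (aₖ : ℂ) s^(qk)`: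
the composition of coefficientwise extension of scalars along `ℝ → ℂ` with the exponent-rescaling
embedding induced by `k ↦ q·k` on `ℤ`.  It identifies `ℂ((s))` with `ℂ((t^(1/q)))` as an
extension of `ℝ((t))`. -/
noncomputable def laurentInclusion (q : ℕ) (hq : 0 < q) :
    LaurentSeries ℝ →+* LaurentSeries ℂ :=
  (HahnSeries.embDomainRingHom (zmultiplesHom ℤ (q : ℤ))
      (fun a b hab => by
        have hq' : (q : ℤ) ≠ 0 := by exact_mod_cast hq.ne'
        simpa [zmultiplesHom_apply, smul_eq_mul] using
          mul_right_cancel₀ hq' (by simpa [zmultiplesHom_apply, smul_eq_mul] using hab))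
      (fun g g' => by
        have hq' : (0 : ℤ) < (q : ℤ) := by exact_mod_cast hq
        simp [zmultiplesHom_apply, smul_eq_mul, mul_le_mul_iff_left₀ hq'])).comp laurentOfReal



namespace LGD

/-- Exponent-scaling map on Laurent series: multiplies the `k`-th coefficient by `u ^ k`. -/
noncomputable def scaleFun (u : ℂˣ) (x : LaurentSeries ℂ) : LaurentSeries ℂ where
  coeff k := (u ^ k : ℂˣ) * x.coeff k
  isPWO_support' := by
    have h : (Function.support fun k : ℤ => ((u ^ k : ℂˣ) : ℂ) * x.coeff k) = x.support := by
      ext k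
      simp only [Function.mem_support, HahnSeries.mem_support, ne_eq]
      rw [Units.mul_right_eq_zero]
    rw [h]; exact x.isPWO_support

@[simp] lemma scaleFun_coeff (u : ℂˣ) (x : LaurentSeries ℂ) (k : ℤ) :
    (scaleFun u x).coeff k = (u ^ k : ℂˣ) * x.coeff k := rfl

lemma scaleFun_support_subset (u : ℂˣ) (x : LaurentSeries ℂ) :
    (scaleFun u x).support ⊆ x.support := by
  intro k hk
  simp only [HahnSeries.mem_support, scaleFun_coeff] at hk ⊢
  exact fun h => hk (by rw [h, mul_zero])

lemma scaleFun_mul (u : ℂˣ) (x y : LaurentSeries ℂ) :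
    scaleFun u (x * y) = scaleFun u x * scaleFun u y := by
  ext k
  rw [scaleFun_coeff, HahnSeries.coeff_mul,
    HahnSeries.coeff_mul_left' (y := scaleFun u y) x.isPWO_support (scaleFun_support_subset u x)]
  rw [Finset.sum_subset (Finset.addAntidiagonal_mono_right (ht := y.isPWO_support) (scaleFun_support_subset u y))]
  · rw [Finset.mul_sum]
    refine Finset.sum_congr rfl fun ij hij => ?_
    rw [Finset.mem_addAntidiagonal] at hij
    simp only [scaleFun_coeff]
    rw [← hij.2.2, zpow_add, Units.val_mul]
    ring
  · intro ij hij hij'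
    rw [Finset.mem_addAntidiagonal] at hij hij'
    have h0 : (scaleFun u y).coeff ij.2 = 0 := by
      by_contra h
      exact hij' ⟨hij.1, h, hij.2.2⟩
    rw [scaleFun_coeff, Units.mul_right_eq_zero] at h0
    exact absurd h0 hij.2.1


/-- Exponent scaling as a ring homomorphism. -/
noncomputable def scaleRingHom (u : ℂˣ) : LaurentSeries ℂ →+* LaurentSeries ℂ where
  toFun := scaleFun u
  map_one' := by
    ext k
    by_cases h : k = (0 : ℤ) <;> simp [h, HahnSeries.coeff_one]
  map_mul' := scaleFun_mul u
  map_zero' := by ext k; simp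
  map_add' x y := by ext k; simp [mul_add]

/-- Exponent scaling as a ring automorphism. -/
noncomputable def scaleAut (u : ℂˣ) : RingAut (LaurentSeries ℂ) :=
  { scaleRingHom u with
    invFun := scaleFun u⁻¹
    left_inv := fun x => by
      ext k
      simp only [scaleRingHom, RingHom.coe_mk, MonoidHom.coe_mk, OneHom.coe_mk, scaleFun_coeff]
      rw [← mul_assoc, ← Units.val_mul, inv_zpow, inv_mul_cancel, Units.val_one, one_mul]
    right_inv := fun x => by
      ext k
      simp only [scaleRingHom, RingHom.coe_mk, MonoidHom.coe_mk, OneHom.coe_mk, scaleFun_coeff]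
      rw [← mul_assoc, ← Units.val_mul, inv_zpow, mul_inv_cancel, Units.val_one, one_mul] }

@[simp] lemma scaleAut_coeff (u : ℂˣ) (x : LaurentSeries ℂ) (k : ℤ) :
    (scaleAut u x).coeff k = (u ^ k : ℂˣ) * x.coeff k := rfl

lemma scaleAut_mul (u v : ℂˣ) :
    scaleAut (u * v) = scaleAut u * scaleAut v := by
  ext x k
  simp only [scaleAut_coeff]
  show _ = (scaleAut u (scaleAut v x)).coeff k
  rw [scaleAut_coeff, scaleAut_coeff, mul_zpow, Units.val_mul, mul_assoc]

@[simp] lemma scaleAut_one : scaleAut 1 = 1 := by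
  ext x k
  show (scaleAut 1 x).coeff k = x.coeff k
  simp

/-- Coefficientwise complex conjugation of Laurent series, as a ring automorphism. -/
noncomputable def conjAut : RingAut (LaurentSeries ℂ) where
  toFun x := x.map (starRingEnd ℂ)
  invFun x := x.map (starRingEnd ℂ)
  left_inv x := by ext k; simp
  right_inv x := by ext k; simp
  map_add' x y := by ext k; simp
  map_mul' x y := HahnSeries.map_mul (starRingEnd ℂ).toNonUnitalRingHom

@[simp] lemma conjAut_coeff (x : LaurentSeries ℂ) (k : ℤ) :
    (conjAut x).coeff k = (starRingEnd ℂ) (x.coeff k) := rfl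

lemma conjAut_conjAut : conjAut * conjAut = 1 := by
  ext x k
  show (conjAut (conjAut x)).coeff k = x.coeff k
  simp

lemma conjAut_scaleAut (u : ℂˣ) :
    conjAut * scaleAut u = scaleAut (Units.map (starRingEnd ℂ).toMonoidHom u) * conjAut := by
  ext x k
  show (conjAut (scaleAut u x)).coeff k = (scaleAut _ (conjAut x)).coeff k
  simp only [conjAut_coeff, scaleAut_coeff, map_mul, ← map_zpow, Units.coe_map,
    MonoidHom.coe_coe]
  rfl


section Zeta

variable (q : ℕ) (ζ : ℂˣ)

/-- The homomorphism `ZMod q →+ Additive ℂˣ` induced by `k ↦ ζ ^ k`. -/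
noncomputable def nuHom (hζ : ζ ^ q = 1) : ZMod q →+ Additive ℂˣ :=
  ZMod.lift q ⟨AddMonoidHom.mk' (fun k => Additive.ofMul (ζ ^ k))
      (fun a b => by simp [zpow_add]), by
    simp only [AddMonoidHom.mk'_apply, zpow_natCast, hζ]; rfl⟩

/-- `nu q ζ hζ i = ζ ^ i` for `i : ZMod q`. -/
noncomputable def nu (hζ : ζ ^ q = 1) (i : ZMod q) : ℂˣ :=
  Additive.toMul (nuHom q ζ hζ i)

variable (hζ : ζ ^ q = 1)

lemma nu_add (i j : ZMod q) : nu q ζ hζ (i + j) = nu q ζ hζ i * nu q ζ hζ j := by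
  unfold nu; rw [map_add]; rfl

lemma nu_zero : nu q ζ hζ 0 = 1 := by
  unfold nu; rw [map_zero]; rfl

lemma nu_neg (i : ZMod q) : nu q ζ hζ (-i) = (nu q ζ hζ i)⁻¹ := by
  unfold nu; rw [map_neg]; rfl

lemma nu_intCast (k : ℤ) : nu q ζ hζ ((k : ℤ) : ZMod q) = ζ ^ k := by
  unfold nu nuHom
  rw [ZMod.lift_coe]
  rfl

lemma nu_val [NeZero q] (i : ZMod q) : nu q ζ hζ i = ζ ^ (i.val : ℕ) := by
  have h1 : (((i.val : ℤ) : ZMod q)) = i := by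
    push_cast
    exact ZMod.natCast_rightInverse i
  conv_lhs => rw [← h1]
  rw [nu_intCast, zpow_natCast]

lemma nu_pow_q (i : ZMod q) : (nu q ζ hζ i) ^ q = 1 := by
  obtain ⟨k, rfl⟩ := ZMod.intCast_surjective i
  rw [nu_intCast, ← zpow_natCast, ← zpow_mul, mul_comm, zpow_mul, zpow_natCast, hζ, one_zpow]

lemma nu_injective [NeZero q] (hprim : IsPrimitiveRoot ζ q) :
    Function.Injective (nu q ζ hζ) := by
  intro i j hij
  rw [nu_val, nu_val] at hij
  have := hprim.pow_inj (ZMod.val_lt i) (ZMod.val_lt j) hij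
  exact ZMod.val_injective q this

/-- conjugating a `q`-th root of unity inverts it. -/
lemma conj_unit_eq_inv (u : ℂˣ) (hu : u ^ q = 1) (hq0 : 0 < q) :
    Units.map (starRingEnd ℂ).toMonoidHom u = u⁻¹ := by
  have hnorm : ‖(u : ℂ)‖ = 1 := by
    have h1 : ‖(u : ℂ)‖ ^ q = 1 := by
      rw [← norm_pow, ← Units.val_pow_eq_pow_val, hu, Units.val_one, norm_one]
    exact (pow_eq_one_iff_of_nonneg (norm_nonneg _) hq0.ne').mp h1
  ext
  rw [Units.coe_map]
  show (starRingEnd ℂ) (u : ℂ) = ((u⁻¹ : ℂˣ) : ℂ)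
  rw [← RCLike.inv_eq_conj hnorm, Units.val_inv_eq_inv_val]


lemma conjAut_scaleAut_nu (hq0 : 0 < q) (i : ZMod q) :
    conjAut * scaleAut (nu q ζ hζ i) = scaleAut (nu q ζ hζ (-i)) * conjAut := by
  rw [conjAut_scaleAut, conj_unit_eq_inv q _ (nu_pow_q q ζ hζ i) hq0, nu_neg]

lemma scaleAut_nu_mul (i j : ZMod q) :
    scaleAut (nu q ζ hζ i) * scaleAut (nu q ζ hζ j) = scaleAut (nu q ζ hζ (i + j)) := by
  rw [nu_add, scaleAut_mul]

/-- The underlying function of the dihedral action. -/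
noncomputable def phiFun (hζ : ζ ^ q = 1) : DihedralGroup q → RingAut (LaurentSeries ℂ)
  | DihedralGroup.r i => scaleAut (nu q ζ hζ i)
  | DihedralGroup.sr i => conjAut * scaleAut (nu q ζ hζ i)

@[simp] lemma phiFun_r (i : ZMod q) :
    phiFun q ζ hζ (DihedralGroup.r i) = scaleAut (nu q ζ hζ i) := rfl

@[simp] lemma phiFun_sr (i : ZMod q) :
    phiFun q ζ hζ (DihedralGroup.sr i) = conjAut * scaleAut (nu q ζ hζ i) := rfl

lemma phiFun_mul (hq0 : 0 < q) (g h : DihedralGroup q) :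
    phiFun q ζ hζ (g * h) = phiFun q ζ hζ g * phiFun q ζ hζ h := by
  rcases g with i | i <;> rcases h with j | j
  · rw [DihedralGroup.r_mul_r, phiFun_r, phiFun_r, phiFun_r, scaleAut_nu_mul]
  · rw [DihedralGroup.r_mul_sr, phiFun_sr, phiFun_r, phiFun_sr, ← mul_assoc,
      show scaleAut (nu q ζ hζ i) * conjAut = conjAut * scaleAut (nu q ζ hζ (-i)) by
        rw [conjAut_scaleAut_nu q ζ hζ hq0 (-i), neg_neg],
      mul_assoc, scaleAut_nu_mul, neg_add_eq_sub]
  · rw [DihedralGroup.sr_mul_r, phiFun_sr, phiFun_r, phiFun_sr, mul_assoc, scaleAut_nu_mul]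
  · rw [DihedralGroup.sr_mul_sr, phiFun_r, phiFun_sr, phiFun_sr, ← mul_assoc,
      mul_assoc conjAut _ conjAut,
      show scaleAut (nu q ζ hζ i) * conjAut = conjAut * scaleAut (nu q ζ hζ (-i)) by
        rw [conjAut_scaleAut_nu q ζ hζ hq0 (-i), neg_neg],
      ← mul_assoc conjAut conjAut, conjAut_conjAut, one_mul, scaleAut_nu_mul, neg_add_eq_sub]

/-- The dihedral group as ring automorphisms of `ℂ((s))`. -/
noncomputable def phi (hq0 : 0 < q) : DihedralGroup q →* RingAut (LaurentSeries ℂ) where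
  toFun := phiFun q ζ hζ
  map_one' := by rw [DihedralGroup.one_def, phiFun_r, nu_zero, scaleAut_one]
  map_mul' := phiFun_mul q ζ hζ hq0

@[simp] lemma phi_r (hq0 : 0 < q) (i : ZMod q) :
    phi q ζ hζ hq0 (DihedralGroup.r i) = scaleAut (nu q ζ hζ i) := rfl

@[simp] lemma phi_sr (hq0 : 0 < q) (i : ZMod q) :
    phi q ζ hζ hq0 (DihedralGroup.sr i) = conjAut * scaleAut (nu q ζ hζ i) := rfl


lemma autMul_apply (a b : RingAut (LaurentSeries ℂ)) (x : LaurentSeries ℂ) :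
    (a * b) x = a (b x) := rfl

lemma scaleAut_inj {u v : ℂˣ} (h : scaleAut u = scaleAut v) : u = v := by
  have h1 := congrArg (fun f : RingAut (LaurentSeries ℂ) =>
    (f (HahnSeries.single (1 : ℤ) (1 : ℂ))).coeff 1) h
  simp only [scaleAut_coeff, HahnSeries.coeff_single_same, mul_one, zpow_one] at h1
  exact Units.ext h1

lemma phi_injective [NeZero q] (hprim : IsPrimitiveRoot ζ q) (hq0 : 0 < q) :
    Function.Injective (phi q ζ hζ hq0) := by
  have nuinj := nu_injective q ζ hζ hprim
  have distinct : ∀ u v : ℂˣ, scaleAut u ≠ conjAut * scaleAut v := by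
    intro u v h
    have h1 := congrArg (fun f : RingAut (LaurentSeries ℂ) =>
      (f (HahnSeries.single (0 : ℤ) Complex.I)).coeff 0) h
    simp only [autMul_apply, scaleAut_coeff, conjAut_coeff, HahnSeries.coeff_single_same,
      zpow_zero, Units.val_one, one_mul, map_mul, Complex.conj_I] at h1
    exact Complex.I_ne_zero (by linear_combination h1 / 2)
  intro g g' h
  have h' : phiFun q ζ hζ g = phiFun q ζ hζ g' := h
  rcases g with i | i <;> rcases g' with j | j
  · rw [phiFun_r, phiFun_r] at h'
    rw [nuinj (scaleAut_inj h')]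
  · exact absurd (by rw [phiFun_r, phiFun_sr] at h'; exact h') (distinct _ _)
  · exact absurd (by rw [phiFun_r, phiFun_sr] at h'; exact h'.symm) (distinct _ _)
  · rw [phiFun_sr, phiFun_sr] at h'
    have := mul_left_cancel h'
    rw [nuinj (scaleAut_inj this)]

end Zeta

/-- Coefficient of `laurentInclusion` at an exponent in the range. -/
lemma laurentInclusion_coeff_smul (q : ℕ) (hq0 : 0 < q) (y : LaurentSeries ℝ) (k : ℤ) :
    (laurentInclusion q hq0 y).coeff (zmultiplesHom ℤ (q : ℤ) k) = (y.coeff k : ℂ) :=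
  HahnSeries.embDomain_coeff

lemma laurentInclusion_coeff_mul (q : ℕ) (hq0 : 0 < q) (y : LaurentSeries ℝ) (k : ℤ) :
    (laurentInclusion q hq0 y).coeff (k * (q : ℤ)) = (y.coeff k : ℂ) := by
  have h := laurentInclusion_coeff_smul q hq0 y k
  rwa [show zmultiplesHom ℤ (q : ℤ) k = k * q from by
    simp [zmultiplesHom_apply, smul_eq_mul]] at h

lemma laurentInclusion_coeff_off (q : ℕ) (hq0 : 0 < q) (y : LaurentSeries ℝ) (m : ℤ)
    (hm : ¬ (q : ℤ) ∣ m) : (laurentInclusion q hq0 y).coeff m = 0 :=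
  HahnSeries.embDomain_notin_range (by
    rintro ⟨k, hk⟩
    exact hm ⟨k, by
      rw [← hk]
      show (zmultiplesHom ℤ (q : ℤ)) k = q * k
      simp [zmultiplesHom_apply, smul_eq_mul, mul_comm]⟩)

end LGD


open LGD

set_option maxHeartbeats 2000000 in
/-- For `q = p^n` a prime power (`n ≥ 1`), `L = ℂ((t^(1/q)))` is a Galois extension of
`K = ℝ((t))` of degree `2q`, with Galois group isomorphic to the dihedral group `D_q` of order
`2q`. -/
theorem laurent_galois_group_dihedral (p : ℕ) (hp : p.Prime) (n : ℕ) (hn : 1 ≤ n)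
    (q : ℕ) (hq : q = p ^ n) :
    letI : Algebra (LaurentSeries ℝ) (LaurentSeries ℂ) :=
      (laurentInclusion q (hq ▸ pow_pos hp.pos n)).toAlgebra
    IsGalois (LaurentSeries ℝ) (LaurentSeries ℂ) ∧
    Module.finrank (LaurentSeries ℝ) (LaurentSeries ℂ) = 2 * q ∧
    Nonempty ((LaurentSeries ℂ ≃ₐ[LaurentSeries ℝ] LaurentSeries ℂ) ≃* DihedralGroup q) := by
  have hq0 : 0 < q := hq ▸ pow_pos hp.pos n
  haveI : NeZero q := ⟨hq0.ne'⟩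
  letI : Algebra (LaurentSeries ℝ) (LaurentSeries ℂ) :=
    (laurentInclusion q (hq ▸ pow_pos hp.pos n)).toAlgebra
  have halg : algebraMap (LaurentSeries ℝ) (LaurentSeries ℂ) = laurentInclusion q hq0 := rfl
  -- a primitive q-th root of unity, as a unit
  have hprimc : IsPrimitiveRoot (Complex.exp (2 * Real.pi * Complex.I / q)) q :=
    Complex.isPrimitiveRoot_exp q hq0.ne'
  set ζ : ℂˣ := (hprimc.isUnit hq0.ne').unit with hζdef
  have hprim : IsPrimitiveRoot ζ q := hprimc.isUnit_unit hq0.ne'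
  have hζ : ζ ^ q = 1 := hprim.pow_eq_one
  -- the dihedral action
  letI act : MulSemiringAction (DihedralGroup q) (LaurentSeries ℂ) :=
    MulSemiringAction.compHom _ (phi q ζ hζ hq0)
  have smul_def : ∀ (g : DihedralGroup q) (x : LaurentSeries ℂ),
      g • x = phi q ζ hζ hq0 g x := fun _ _ => rfl
  haveI : FaithfulSMul (DihedralGroup q) (LaurentSeries ℂ) :=
    ⟨fun {g g'} h => phi_injective q ζ hζ hprim hq0 (RingEquiv.ext fun x => h x)⟩
  -- the fixed field is exactly the image of ℝ((t))
  have hFset : (FixedPoints.subfield (DihedralGroup q) (LaurentSeries ℂ) : Set (LaurentSeries ℂ))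
      = Set.range (laurentInclusion q hq0) := by
    ext x
    constructor
    · intro hx
      have hx' : ∀ g : DihedralGroup q, g • x = x := hx
      -- conjugation invariance: all coefficients are real
      have hconj : ∀ k : ℤ, (starRingEnd ℂ) (x.coeff k) = x.coeff k := by
        intro k
        have h1 := hx' (DihedralGroup.sr 0)
        rw [smul_def] at h1
        have h1' : conjAut (scaleAut (nu q ζ hζ 0) x) = x := h1
        rw [nu_zero, scaleAut_one] at h1'
        have := congrArg (fun z : LaurentSeries ℂ => z.coeff k) h1'
        simpa using this
      -- rotation invariance: coefficients vanish off multiples of q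
      have hoff : ∀ k : ℤ, ¬ ((q : ℤ) ∣ k) → x.coeff k = 0 := by
        intro k hk
        have h2 := hx' (DihedralGroup.r 1)
        rw [smul_def] at h2
        have h2' : scaleAut (nu q ζ hζ 1) x = x := h2
        have hnu1 : nu q ζ hζ 1 = ζ := by
          have : ((1 : ℤ) : ZMod q) = (1 : ZMod q) := by push_cast; rfl
          rw [← this, nu_intCast, zpow_one]
        rw [hnu1] at h2'
        have h3 := congrArg (fun z : LaurentSeries ℂ => z.coeff k) h2'
        simp only [scaleAut_coeff] at h3
        by_contra hx0
        have h4 : ((ζ ^ k : ℂˣ) : ℂ) = 1 :=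
          mul_right_cancel₀ hx0 (h3.trans (one_mul _).symm)
        have h5 : (ζ : ℂˣ) ^ k = 1 := Units.ext (by simpa using h4)
        exact hk ((hprim.zpow_eq_one_iff_dvd k).mp h5)
      -- build the real preimage
      have hbdd : BddBelow x.support := by
        rcases Set.eq_empty_or_nonempty x.support with hE | hNE
        · rw [hE]; exact bddBelow_empty
        · exact ⟨x.isWF_support.min hNE, fun z hz => x.isWF_support.min_le hNE hz⟩
      obtain ⟨b, hb⟩ := hbdd
      have hq1 : (1 : ℤ) ≤ (q : ℤ) := by exact_mod_cast hq0
      have hsbdd : BddBelow {k : ℤ | x.coeff (k * q) ≠ 0} := by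
        refine ⟨-|b|, fun k hk => ?_⟩
        have h1 : b ≤ k * q := hb hk
        have h2 : -|b| ≤ b := neg_abs_le b
        nlinarith [abs_nonneg b]
      have hs : {k : ℤ | x.coeff (k * q) ≠ 0}.IsPWO := Set.IsWF.isPWO (BddBelow.wellFoundedOn_lt hsbdd)
      refine ⟨⟨fun k => (x.coeff (k * q)).re, hs.mono fun k hk => ?_⟩, ?_⟩
      · simp only [Function.mem_support, ne_eq, Set.mem_setOf_eq] at hk ⊢
        intro h0
        exact hk (by rw [h0]; simp)
      · ext m
        by_cases hdvd : (q : ℤ) ∣ m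
        · obtain ⟨k, rfl⟩ := hdvd
          rw [mul_comm]
          rw [laurentInclusion_coeff_mul q hq0 _ k]
          show (((x.coeff (k * q)).re : ℝ) : ℂ) = x.coeff (k * q)
          exact (Complex.conj_eq_iff_re.mp (hconj _))
        · rw [laurentInclusion_coeff_off q hq0 _ m hdvd]
          exact (hoff m hdvd).symm
    · rintro ⟨y, rfl⟩
      intro g
      have hr : ∀ i : ZMod q, scaleAut (nu q ζ hζ i) (laurentInclusion q hq0 y)
          = laurentInclusion q hq0 y := by
        intro i
        ext m
        rw [scaleAut_coeff]
        by_cases hdvd : (q : ℤ) ∣ m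
        · obtain ⟨k, rfl⟩ := hdvd
          have hpow : (nu q ζ hζ i) ^ ((q : ℤ) * k) = 1 := by
            rw [zpow_mul, zpow_natCast, nu_pow_q, one_zpow]
          rw [hpow, Units.val_one, one_mul]
        · rw [laurentInclusion_coeff_off q hq0 _ m hdvd, mul_zero]
      have hc : conjAut (laurentInclusion q hq0 y) = laurentInclusion q hq0 y := by
        ext m
        rw [conjAut_coeff]
        by_cases hdvd : (q : ℤ) ∣ m
        · obtain ⟨k, rfl⟩ := hdvd
          rw [mul_comm, laurentInclusion_coeff_mul q hq0 _ k, Complex.conj_ofReal]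
        · rw [laurentInclusion_coeff_off q hq0 _ m hdvd, map_zero]
      rcases g with i | i
      · rw [smul_def]
        exact hr i
      · rw [smul_def]
        show conjAut (scaleAut (nu q ζ hζ i) (laurentInclusion q hq0 y)) = _
        rw [hr i, hc]
  -- the ring isomorphism onto the fixed field
  have hinj : Function.Injective (laurentInclusion q hq0) :=
    (laurentInclusion q hq0).injective
  have hmem : ∀ k : LaurentSeries ℝ,
      laurentInclusion q hq0 k ∈ FixedPoints.subfield (DihedralGroup q) (LaurentSeries ℂ) := by
    intro k
    have : laurentInclusion q hq0 k ∈
        (FixedPoints.subfield (DihedralGroup q) (LaurentSeries ℂ) : Set (LaurentSeries ℂ)) := by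
      rw [hFset]; exact Set.mem_range_self k
    exact this
  let emap : LaurentSeries ℝ →+* FixedPoints.subfield (DihedralGroup q) (LaurentSeries ℂ) :=
    (laurentInclusion q hq0).codRestrict _ hmem
  have hebij : Function.Bijective emap := by
    constructor
    · intro a b hab
      exact hinj (congrArg Subtype.val hab)
    · rintro ⟨z, hz⟩
      have : z ∈ (FixedPoints.subfield (DihedralGroup q) (LaurentSeries ℂ)
          : Set (LaurentSeries ℂ)) := hz
      rw [hFset] at this
      obtain ⟨k, hk⟩ := this
      exact ⟨k, Subtype.ext hk⟩
  let e := RingEquiv.ofBijective emap hebij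
  letI : Algebra (LaurentSeries ℝ) (FixedPoints.subfield (DihedralGroup q) (LaurentSeries ℂ)) :=
    (e : LaurentSeries ℝ →+* FixedPoints.subfield (DihedralGroup q) (LaurentSeries ℂ)).toAlgebra
  haveI : IsScalarTower (LaurentSeries ℝ)
      (FixedPoints.subfield (DihedralGroup q) (LaurentSeries ℂ)) (LaurentSeries ℂ) :=
    ⟨fun a b c => by
      show ((a • b : FixedPoints.subfield (DihedralGroup q) (LaurentSeries ℂ))
          : LaurentSeries ℂ) * c = laurentInclusion q hq0 a * ((b : LaurentSeries ℂ) * c)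
      have hab : ((a • b : FixedPoints.subfield (DihedralGroup q) (LaurentSeries ℂ))
          : LaurentSeries ℂ) = laurentInclusion q hq0 a * (b : LaurentSeries ℂ) := rfl
      rw [hab, mul_assoc]⟩
  -- finite dimensionality and degree
  have elin : (LaurentSeries ℝ) ≃ₗ[LaurentSeries ℝ]
      (FixedPoints.subfield (DihedralGroup q) (LaurentSeries ℂ)) :=
    LinearEquiv.ofBijective (Algebra.linearMap _ _) hebij
  haveI : FiniteDimensional (LaurentSeries ℝ)
      (FixedPoints.subfield (DihedralGroup q) (LaurentSeries ℂ)) :=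
    Module.Finite.equiv elin
  haveI : FiniteDimensional (LaurentSeries ℝ) (LaurentSeries ℂ) :=
    FiniteDimensional.trans (LaurentSeries ℝ)
      (FixedPoints.subfield (DihedralGroup q) (LaurentSeries ℂ)) (LaurentSeries ℂ)
  have hrank1 : Module.finrank (LaurentSeries ℝ)
      (FixedPoints.subfield (DihedralGroup q) (LaurentSeries ℂ)) = 1 := by
    rw [← elin.finrank_eq, Module.finrank_self]
  have hfinrank : Module.finrank (LaurentSeries ℝ) (LaurentSeries ℂ) = 2 * q := by
    rw [← Module.finrank_mul_finrank (LaurentSeries ℝ)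
      (FixedPoints.subfield (DihedralGroup q) (LaurentSeries ℂ)) (LaurentSeries ℂ),
      hrank1, one_mul, FixedPoints.finrank_eq_card (DihedralGroup q) (LaurentSeries ℂ),
      DihedralGroup.card]
  -- the automorphism groups over K and over the fixed field coincide
  have galEquiv : (LaurentSeries ℂ ≃ₐ[LaurentSeries ℝ] LaurentSeries ℂ) ≃*
      (LaurentSeries ℂ ≃ₐ[FixedPoints.subfield (DihedralGroup q) (LaurentSeries ℂ)]
        LaurentSeries ℂ) :=
  { toFun := fun σ => AlgEquiv.ofRingEquiv (f := σ.toRingEquiv) (fun f => by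
      have : (f : LaurentSeries ℂ) ∈ Set.range (laurentInclusion q hq0) := hFset ▸ f.2
      obtain ⟨k, hk⟩ := this
      show σ (f : LaurentSeries ℂ) = (f : LaurentSeries ℂ)
      rw [← hk]
      exact σ.commutes k)
    invFun := fun τ => AlgEquiv.ofRingEquiv (f := τ.toRingEquiv) (fun k => by
      show τ (laurentInclusion q hq0 k) = laurentInclusion q hq0 k
      have h1 := τ.commutes (⟨laurentInclusion q hq0 k, hmem k⟩ :
        FixedPoints.subfield (DihedralGroup q) (LaurentSeries ℂ))
      exact h1)
    left_inv := fun σ => by ext x; rfl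
    right_inv := fun τ => by ext x; rfl
    map_mul' := fun a b => by ext x; rfl }
  haveI : IsGalois (FixedPoints.subfield (DihedralGroup q) (LaurentSeries ℂ)) (LaurentSeries ℂ) :=
    ⟨⟩
  have hcard : Fintype.card (LaurentSeries ℂ ≃ₐ[LaurentSeries ℝ] LaurentSeries ℂ) = 2 * q := by
    rw [Fintype.card_congr galEquiv.toEquiv, ← Nat.card_eq_fintype_card,
      IsGalois.card_aut_eq_finrank,
      FixedPoints.finrank_eq_card (DihedralGroup q) (LaurentSeries ℂ), DihedralGroup.card]
  haveI hgal : IsGalois (LaurentSeries ℝ) (LaurentSeries ℂ) :=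
    IsGalois.of_card_aut_eq_finrank (LaurentSeries ℝ) (LaurentSeries ℂ)
      (Nat.card_eq_fintype_card.trans (hcard.trans hfinrank.symm))
  refine ⟨hgal, hfinrank, ⟨galEquiv.trans
    (FixedPoints.toAlgAutMulEquiv (DihedralGroup q) (LaurentSeries ℂ)).symm⟩⟩
end
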